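/- Let R ∈ {0,1}^{n×n} be a binary matrix with R ≥ I_n. Then there exists an invertible matrix X ∈ ℝ^{n×n} with X ∈ Sparse(R) such that Struct(X⁻¹) = R^{n−1}, i.e., (X⁻¹)_{ij} ≠ 0 if and only if (R^{n−1})_{ij} = 1, where R^{n−1} is the (n−1)-fold structural power of R. -/

import Mathlib

open Matrix

/-- Structural product of binary (Boolean) matrices:
`(sprod X Z) i j = true` iff `∃ k, X i k = true ∧ Z k j = true`. -/
def sprod {m n p : ℕ} (X : Matrix (Fin m) (Fin n) Bool) (Z : Matrix (Fin n) (Fin p) Bool) :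
    Matrix (Fin m) (Fin p) Bool :=
  Matrix.of fun i j => decide (∃ k, X i k = true ∧ Z k j = true)

/-- Structural power of a binary matrix, with `spow R 0 = I`. -/
def spow {n : ℕ} (R : Matrix (Fin n) (Fin n) Bool) : ℕ → Matrix (Fin n) (Fin n) Bool
  | 0 => Matrix.of fun i j => decide (i = j)
  | k + 1 => sprod (spow R k) R

/-- `Y` belongs to the sparsity subspace `Sparse(X)`. -/
def InSparse {m n : ℕ} (X : Matrix (Fin m) (Fin n) Bool) (Y : Matrix (Fin m) (Fin n) ℝ) : Prop :=
  ∀ i j, X i j = false → Y i j = 0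

/-- The binary matrix encoding the sparsity pattern of a real matrix. -/
noncomputable def Struct {m n : ℕ} (Y : Matrix (Fin m) (Fin n) ℝ) : Matrix (Fin m) (Fin n) Bool :=
  Matrix.of fun i j => decide (Y i j ≠ 0)

/-- Entrywise order on binary matrices: `leB X X'` means `X ≤ X'`. -/
def leB {m n : ℕ} (X X' : Matrix (Fin m) (Fin n) Bool) : Prop :=
  ∀ i j, X i j = true → X' i j = true

attribute [local instance] Matrix.linftyOpNormedRing Matrix.linftyOpNormedAlgebra
  Matrix.linftyOpNormedAddCommGroup

section aux
variable {n : ℕ} (R : Matrix (Fin n) (Fin n) Bool)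

/-- The real 0/1 matrix with pattern `R`. -/
noncomputable def Bmat : Matrix (Fin n) (Fin n) ℝ :=
  Matrix.of fun i j => if R i j then 1 else 0

lemma Bmat_nonneg (i j : Fin n) : 0 ≤ Bmat R i j := by
  unfold Bmat; dsimp; split <;> norm_num

lemma spow_succ_iff (k : ℕ) (i j : Fin n) :
    spow R (k+1) i j = true ↔ ∃ l, spow R k i l = true ∧ R l j = true := by
  show (sprod (spow R k) R) i j = true ↔ _
  simp only [sprod, Matrix.of_apply, decide_eq_true_iff]

lemma Bmat_pow (k : ℕ) (i j : Fin n) :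
    0 ≤ (Bmat R ^ k) i j ∧ ((Bmat R ^ k) i j ≠ 0 ↔ spow R k i j = true) := by
  induction k generalizing i j with
  | zero =>
      simp only [pow_zero, spow, Matrix.one_apply, Matrix.of_apply]
      constructor
      · split <;> norm_num
      · split <;> simp_all
  | succ k ih =>
      rw [pow_succ]
      constructor
      · rw [Matrix.mul_apply]
        exact Finset.sum_nonneg fun l _ => mul_nonneg (ih i l).1 (Bmat_nonneg R l j)
      · rw [Matrix.mul_apply]
        rw [spow_succ_iff]
        constructor
        · intro hs
          by_contra hc
          push_neg at hc
          apply hs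
          apply Finset.sum_eq_zero
          intro l _
          by_cases h1 : spow R k i l = true
          · have h2 : R l j ≠ true := fun h => hc l h1 h
            have : Bmat R l j = 0 := by
              unfold Bmat; simp [Bool.not_eq_true] at h2; simp [h2]
            simp [this]
          · have : (Bmat R ^ k) i l = 0 := by
              by_contra h3; exact h1 ((ih i l).2.mp h3)
            simp [this]
        · rintro ⟨l, hl1, hl2⟩
          have h1 : 0 < (Bmat R ^ k) i l := lt_of_le_of_ne (ih i l).1 (Ne.symm ((ih i l).2.mpr hl1))
          have h2 : (0:ℝ) < Bmat R l j := by unfold Bmat; simp [hl2]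
          have := Finset.sum_pos' (fun l' _ => mul_nonneg (ih i l').1 (Bmat_nonneg R l' j))
            ⟨l, Finset.mem_univ l, mul_pos h1 h2⟩
          exact ne_of_gt this

lemma spow_le_last (hdiag : ∀ i, R i i = true) (k : ℕ) (i j : Fin n)
    (h : spow R k i j = true) : spow R (n-1) i j = true := by
  have hn : 1 ≤ n := i.pos
  set S : ℕ → Finset (Fin n) := fun m => Finset.univ.filter (fun j => spow R m i j = true)
    with hS
  have hmem : ∀ m j, j ∈ S m ↔ spow R m i j = true := by intro m j; simp [hS]
  have hstep : ∀ m, S (m+1) = Finset.univ.filter (fun j => ∃ l ∈ S m, R l j = true) := by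
    intro m; ext j
    simp only [hS, Finset.mem_filter, Finset.mem_univ, true_and, spow_succ_iff]
  have hmono : ∀ m, S m ⊆ S (m+1) := by
    intro m j hj; rw [hstep]
    simp only [Finset.mem_filter, Finset.mem_univ, true_and]
    exact ⟨j, hj, hdiag j⟩
  have hmono' : ∀ a b, a ≤ b → S a ⊆ S b := by
    intro a b hab
    induction b, hab using Nat.le_induction with
    | base => exact subset_rfl
    | succ b hb ih => exact ih.trans (hmono b)
  have hstab : ∀ m, S m = S (m+1) → ∀ p, m ≤ p → S p = S m := by
    intro m hm p hp
    induction p, hp using Nat.le_induction with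
    | base => rfl
    | succ p hp ih => rw [hstep p, ih, ← hstep m, ← hm]
  have hi0 : i ∈ S 0 := by
    rw [hmem]; show (Matrix.of fun i j => decide (i = j)) i i = true; simp
  have hA : ∀ m, S m = S (m+1) ∨ m + 2 ≤ (S (m+1)).card := by
    intro m
    induction m with
    | zero =>
        by_cases h0 : S 0 = S 1
        · exact Or.inl h0
        · right
          have hss : S 0 ⊂ S (0+1) := Finset.ssubset_iff_subset_ne.mpr ⟨hmono 0, h0⟩
          have h1 : 1 ≤ (S 0).card := Finset.card_pos.mpr ⟨i, hi0⟩
          have h2 := Finset.card_lt_card hss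
          omega
    | succ m ih =>
        by_cases hm : S (m+1) = S (m+2)
        · exact Or.inl hm
        · right
          have hcard : m + 2 ≤ (S (m+1)).card := by
            rcases ih with h' | h'
            · exact absurd ((hstab m h' (m+2) (by omega)).trans
                (hstab m h' (m+1) (by omega)).symm).symm hm
            · exact h'
          have hss : S (m+1) ⊂ S (m+1+1) :=
            Finset.ssubset_iff_subset_ne.mpr ⟨hmono (m+1), (by simpa using hm)⟩
          have h2 := Finset.card_lt_card hss
          omega
  have hcardle : ∀ m, (S m).card ≤ n := by
    intro m
    have := Finset.card_le_card (Finset.subset_univ (S m))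
    simpa using this
  have key : S (n-1) = S (n-1+1) := by
    rcases hA (n-1) with h | h
    · exact h
    · have := hcardle (n-1+1); omega
  rcases le_or_gt k (n-1) with hk | hk
  · exact (hmem _ _).mp (hmono' k (n-1) hk ((hmem _ _).mpr h))
  · have := hstab (n-1) key k (by omega)
    rw [← hmem, ← this, hmem]; exact h

lemma entry_nnnorm_le (A : Matrix (Fin n) (Fin n) ℝ) (i j : Fin n) : ‖A i j‖₊ ≤ ‖A‖₊ := by
  rw [Matrix.linfty_opNNNorm_def]
  exact le_trans
    (Finset.single_le_sum (f := fun j' => ‖A i j'‖₊) (fun _ _ => zero_le) (Finset.mem_univ j))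
    (Finset.le_sup (f := fun i => ∑ j, ‖A i j‖₊) (Finset.mem_univ i))

/-- Entry evaluation as a continuous linear map (for the `L∞`-operator norm). -/
noncomputable def entryCLM (i j : Fin n) : Matrix (Fin n) (Fin n) ℝ →L[ℝ] ℝ :=
  LinearMap.mkContinuous
    { toFun := fun A => A i j
      map_add' := fun A B => rfl
      map_smul' := fun c A => rfl } 1
    (fun A => by
      rw [one_mul]
      exact_mod_cast entry_nnnorm_le A i j)

lemma inv_entry_eq (t : Matrix (Fin n) (Fin n) ℝ) (h : ‖t‖ < 1) (i j : Fin n) :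
    (1 - t)⁻¹ i j = ∑' k : ℕ, (t ^ k) i j := by
  have hsum : Summable fun k : ℕ => t ^ k := summable_geometric_of_norm_lt_one h
  have hu : (1 - t)⁻¹ = ∑' k : ℕ, t ^ k := by
    apply Matrix.inv_eq_right_inv
    exact (Units.oneSub t h).val_inv
  rw [hu]
  exact ContinuousLinearMap.map_tsum (entryCLM i j) hsum

end aux

/-- Lemma A1, part 2: if `R ≥ Iₙ`, there exists an invertible
`X ∈ Sparse(R)` with `Struct(X⁻¹) = R^{n-1}`, i.e. `(X⁻¹)_{ij} ≠ 0` iff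
`(R^{n-1})_{ij} = 1`. -/
theorem exists_sparse_invertible_with_fullest_inverse {n : ℕ}
    (R : Matrix (Fin n) (Fin n) Bool) (hdiag : ∀ i, R i i = true) :
    ∃ X : Matrix (Fin n) (Fin n) ℝ, IsUnit X ∧ InSparse R X ∧
      Struct X⁻¹ = spow R (n - 1) := by
  classical
  set B := Bmat R with hBdef
  set ε : ℝ := (‖B‖ + 1)⁻¹ with hεdef
  have hB0 : (0:ℝ) ≤ ‖B‖ := norm_nonneg _
  have hε : 0 < ε := by positivity
  set t := ε • B with htdef
  have ht : ‖t‖ < 1 := by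
    rw [htdef, norm_smul, Real.norm_eq_abs, abs_of_pos hε]
    calc ε * ‖B‖ < ε * (‖B‖ + 1) := by
          exact mul_lt_mul_of_pos_left (by linarith) hε
      _ = 1 := inv_mul_cancel₀ (by positivity)
  refine ⟨1 - t, isUnit_one_sub_of_norm_lt_one ht, ?_, ?_⟩
  · intro i j hij
    have hne : i ≠ j := by
      intro h; rw [h, hdiag j] at hij; exact Bool.noConfusion hij
    show (1 - t) i j = 0
    rw [Matrix.sub_apply, Matrix.one_apply_ne hne, htdef, Matrix.smul_apply]
    have hB : B i j = 0 := by rw [hBdef]; unfold Bmat; simp [hij]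
    simp [hB]
  · have hterm : ∀ (k : ℕ) (i j : Fin n), (t ^ k) i j = ε ^ k * (B ^ k) i j := by
      intro k i j
      rw [htdef, smul_pow, Matrix.smul_apply, smul_eq_mul]
    have hiff : ∀ i j : Fin n, ((1 - t)⁻¹ i j ≠ 0 ↔ spow R (n-1) i j = true) := by
      intro i j
      rw [inv_entry_eq t ht i j]
      have hnn : ∀ k : ℕ, 0 ≤ (t ^ k) i j := fun k => by
        rw [hterm]; exact mul_nonneg (pow_nonneg hε.le k) (Bmat_pow R k i j).1
      have hsum : Summable fun k : ℕ => (t ^ k) i j :=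
        ((summable_geometric_of_norm_lt_one ht).hasSum.mapL (entryCLM i j)).summable
      constructor
      · intro hne
        by_contra hc
        apply hne
        have hz : ∀ k : ℕ, (t ^ k) i j = 0 := by
          intro k
          by_contra hk
          have hBk : (B ^ k) i j ≠ 0 := by
            intro h0; apply hk; rw [hterm, h0, mul_zero]
          exact hc (spow_le_last R hdiag k i j ((Bmat_pow R k i j).2.mp hBk))
        calc (∑' k : ℕ, (t ^ k) i j) = ∑' _ : ℕ, (0:ℝ) := tsum_congr hz
          _ = 0 := tsum_zero
      · intro hsp
        have h1 : (B ^ (n-1)) i j ≠ 0 := (Bmat_pow R (n-1) i j).2.mpr hsp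
        have hpos : 0 < (t ^ (n-1)) i j := by
          rw [hterm]
          exact mul_pos (pow_pos hε _)
            (lt_of_le_of_ne (Bmat_pow R (n-1) i j).1 (Ne.symm h1))
        exact ne_of_gt (Summable.tsum_pos hsum hnn (n-1) hpos)
    ext i j
    show decide ((1 - t)⁻¹ i j ≠ 0) = spow R (n-1) i j
    cases hsp : spow R (n-1) i j with
    | true => exact decide_eq_true ((hiff i j).mpr hsp)
    | false =>
        apply decide_eq_false
        intro hne
        rw [(hiff i j).mp hne] at hsp
        exact Bool.noConfusion hsp
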